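/- (Theorem 4: non-trivial consensus under switching topologies.) Fix N, d ≥ 1 and θ ∈ ℝ^d, θ ≠ 0. Let A^{(1)},…,A^{(M)} be finitely many signed matrix-weight assignments on N vertices, each satisfying Assumption 1 with its own partition V1^{(m)} ∪ V2^{(m)}, and such that for each m, Σ_{j∈Ω_i^{(m)}}|A^{(m)}_{ij}| is positive definite for every i ∈ V1^{(m)}, where Ω_i^{(m)} = {j : A^{(m)}_{ij} is negative semidefinite and nonzero}. For each m choose δ^{(m)} > max( 0, max_{i∈V1^{(m)}} (1/2) λ_max[ (Σ_{j∈Ω_i^{(m)}}|A^{(m)}_{ij}|)⁻¹ ( Σ_{j∈N'^{(m)}_i}|A^{(m)}_{ji}| − Σ_{j∈N^{(m)}_i}|A^{(m)}_{ij}| ) ] ) and apply the design: δ_i^{(m)} = δ^{(m)} for i with Ω_i^{(m)} ≠ ∅ and 0 otherwise; B_i^{(m)} = Σ_{j∈Ω_i^{(m)}}|A^{(m)}_{ij}| for such i and 0 otherwise; x_0^{(m)} = (1 + 2/δ^{(m)})θ; let L_B^{(m)} be the corresponding grounded Laplacian and b^{(m)} ∈ ℝ^{Nd} the vector with i-th block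 δ_i^{(m)} B_i^{(m)} x_0^{(m)}. Let α > 0, let (t_k)_{k≥0} be strictly increasing with t_0 = 0, t_{k+1} − t_k ≥ α, t_k → ∞, and σ : ℕ → {1,…,M}. Then every continuous x : [0,∞) → ℝ^{Nd} that on each interval (t_k, t_{k+1}) is differentiable with x'(t) = −L_B^{(σ(k))} x(t) + b^{(σ(k))} satisfies x(t) → 1_N ⊗ θ as t → ∞. -/

import Mathlib

open Matrix Filter
open scoped Classical

/-- `|Q|` for a real symmetric matrix that is positive semidefinite or negative
semidefinite: it equals `Q` in the first case and `-Q` in the second. -/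
noncomputable def absM {d : ℕ} (Q : Matrix (Fin d) (Fin d) ℝ) : Matrix (Fin d) (Fin d) ℝ :=
  if Q.PosSemidef then Q else -Q

/-- A signed matrix-weight assignment: for `i ≠ j`, each weight `A i j` is symmetric
and either positive semidefinite or negative semidefinite. -/
def SignedWeights {N d : ℕ} (A : Fin N → Fin N → Matrix (Fin d) (Fin d) ℝ) : Prop :=
  ∀ i j : Fin N, i ≠ j → (A i j).IsSymm ∧ ((A i j).PosSemidef ∨ (-(A i j)).PosSemidef)

/-- The signed matrix-weighted Laplacian: `(i,j)` block `−A_{ij}` for `j ≠ i`, and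
`(i,i)` block `Σ_{k≠i}|A_{ik}|`. -/
noncomputable def Lap {N d : ℕ} (A : Fin N → Fin N → Matrix (Fin d) (Fin d) ℝ) :
    Matrix (Fin N × Fin d) (Fin N × Fin d) ℝ :=
  fun p q =>
    if p.1 = q.1 then (∑ k ∈ Finset.univ.erase p.1, absM (A p.1 k)) p.2 q.2
    else (-(A p.1 q.1)) p.2 q.2

/-- The block-diagonal `Nd × Nd` matrix with `d × d` diagonal blocks `D 1, …, D N`. -/
def blockDiag' {N d : ℕ} (D : Fin N → Matrix (Fin d) (Fin d) ℝ) :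
    Matrix (Fin N × Fin d) (Fin N × Fin d) ℝ :=
  fun p q => if p.1 = q.1 then D p.1 p.2 q.2 else 0

/-- Matrix-weighted in-degree `Σ_{k∈N_i}|A_{ik}|` of vertex `i`
(weights `A i k = 0` contribute nothing). -/
noncomputable def inDeg {N d : ℕ} (A : Fin N → Fin N → Matrix (Fin d) (Fin d) ℝ)
    (i : Fin N) : Matrix (Fin d) (Fin d) ℝ :=
  ∑ k ∈ Finset.univ.erase i, absM (A i k)

/-- Matrix-weighted out-degree `Σ_{k∈N'_i}|A_{ki}|` of vertex `i`. -/
noncomputable def outDeg {N d : ℕ} (A : Fin N → Fin N → Matrix (Fin d) (Fin d) ℝ)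
    (i : Fin N) : Matrix (Fin d) (Fin d) ℝ :=
  ∑ k ∈ Finset.univ.erase i, absM (A k i)

/-- A positive–negative path from `i` to `j`: a sequence `i = p 0, …, p m = j` with
`m ≥ 1` in which every traversed weight `A_{p(s+1), p(s)}` is positive or negative
definite. -/
def PNPath {N d : ℕ} (A : Fin N → Fin N → Matrix (Fin d) (Fin d) ℝ) (i j : Fin N) : Prop :=
  ∃ m : ℕ, 0 < m ∧ ∃ p : Fin (m + 1) → Fin N, p 0 = i ∧ p (Fin.last m) = j ∧
    ∀ s : Fin m, (A (p s.succ) (p s.castSucc)).PosDef ∨ (-(A (p s.succ) (p s.castSucc))).PosDef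

/-- Vertex `j` is in-degree-dominated. -/
def InDegDom {N d : ℕ} (A : Fin N → Fin N → Matrix (Fin d) (Fin d) ℝ) (j : Fin N) : Prop :=
  (inDeg A j - outDeg A j).PosSemidef

/-- Assumption 1: `{1,…,N} = V1 ∪ V2` disjointly, every `j ∈ V2` is reached from some
`i ∈ V1` by a positive–negative path, and every `j ∈ V2` is in-degree-dominated. -/
def Assumption1 {N d : ℕ} (A : Fin N → Fin N → Matrix (Fin d) (Fin d) ℝ)
    (V1 V2 : Finset (Fin N)) : Prop :=
  V1 ∪ V2 = Finset.univ ∧ V1 ∩ V2 = ∅ ∧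
    (∀ j ∈ V2, ∃ i ∈ V1, PNPath A i j) ∧ (∀ j ∈ V2, InDegDom A j)

/-- `Ω_i`: the set of (other) vertices `j` with `A_{ij}` negative semidefinite and nonzero. -/
noncomputable def OmegaSet {N d : ℕ} (A : Fin N → Fin N → Matrix (Fin d) (Fin d) ℝ)
    (i : Fin N) : Finset (Fin N) :=
  (Finset.univ.erase i).filter fun j => (-(A i j)).PosSemidef ∧ A i j ≠ 0


/-! ### Auxiliary lemmas -/

section SpectralAux
open Polynomial
open scoped MatrixOrder
variable {n : Type*} [Fintype n] [DecidableEq n]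

lemma isRoot_charpoly_of_eig (M : Matrix n n ℝ) {μ : ℝ} {v : n → ℝ} (hv : v ≠ 0)
    (h : M *ᵥ v = μ • v) : M.charpoly.IsRoot μ := by
  have hdet : ((μ • (1 : Matrix n n ℝ)) - M).det = 0 := by
    rw [← Matrix.exists_mulVec_eq_zero_iff]
    refine ⟨v, hv, ?_⟩
    rw [sub_mulVec, smul_mulVec, one_mulVec, h, sub_self]
  have heval : M.charpoly.eval μ = ((μ • (1 : Matrix n n ℝ)) - M).det := by
    have : M.charpoly.eval μ = ((Polynomial.evalRingHom μ).mapMatrix M.charmatrix).det := by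
      rw [Matrix.charpoly, ← RingHom.map_det]; rfl
    rw [this]
    congr 1
    ext i j
    by_cases hij : i = j <;>
      simp [Matrix.charmatrix_apply, hij, Matrix.one_apply, Matrix.diagonal_apply, Matrix.sub_apply,
        Matrix.smul_apply]
  rwa [Polynomial.IsRoot, heval]

lemma real_spectral_decomp {Q : Matrix n n ℝ} (hQ : Q.IsHermitian) (v : n → ℝ) :
    ∃ w : n → ℝ, (v ⬝ᵥ Q *ᵥ v = ∑ i, hQ.eigenvalues i * (w i * w i)) ∧ v ⬝ᵥ v = ∑ i, w i * w i := by
  set U : Matrix n n ℝ := (hQ.eigenvectorUnitary : Matrix n n ℝ) with hU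
  have hUU : U * star U = 1 := Matrix.mem_unitaryGroup_iff.mp hQ.eigenvectorUnitary.2
  set w : n → ℝ := (star U) *ᵥ v with hw
  have hdiag : RCLike.ofReal ∘ hQ.eigenvalues = hQ.eigenvalues := by
    ext i; simp
  have hvU : ∀ z : n → ℝ, v ⬝ᵥ U *ᵥ z = w ⬝ᵥ z := by
    intro z
    rw [Matrix.dotProduct_mulVec, hw]
    congr 1
    rw [Matrix.star_eq_conjTranspose, Matrix.conjTranspose_eq_transpose_of_trivial,
      Matrix.mulVec_transpose]
  refine ⟨w, ?_, ?_⟩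
  · conv_lhs => rw [hQ.spectral_theorem]
    rw [Unitary.conjStarAlgAut_apply, hdiag, ← Matrix.mulVec_mulVec, ← Matrix.mulVec_mulVec, hvU, ← hw]
    simp only [dotProduct, Matrix.mulVec_diagonal]
    exact Finset.sum_congr rfl fun i _ => by ring
  · have hv' : v = U *ᵥ w := by
      rw [hw, Matrix.mulVec_mulVec, hUU, Matrix.one_mulVec]
    calc v ⬝ᵥ v = v ⬝ᵥ U *ᵥ w := by rw [← hv']
    _ = w ⬝ᵥ w := hvU w
    _ = ∑ i, w i * w i := rfl

lemma rayleigh_le {Q : Matrix n n ℝ} (hQ : Q.IsHermitian) {c : ℝ}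
    (hc : ∀ i, hQ.eigenvalues i ≤ c) (v : n → ℝ) : v ⬝ᵥ Q *ᵥ v ≤ c * (v ⬝ᵥ v) := by
  obtain ⟨w, h1, h2⟩ := real_spectral_decomp hQ v
  rw [h1, h2, Finset.mul_sum]
  exact Finset.sum_le_sum fun i _ => mul_le_mul_of_nonneg_right (hc i) (mul_self_nonneg _)

lemma rayleigh_ge {Q : Matrix n n ℝ} (hQ : Q.IsHermitian) {c : ℝ}
    (hc : ∀ i, c ≤ hQ.eigenvalues i) (v : n → ℝ) : c * (v ⬝ᵥ v) ≤ v ⬝ᵥ Q *ᵥ v := by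
  obtain ⟨w, h1, h2⟩ := real_spectral_decomp hQ v
  rw [h1, h2, Finset.mul_sum]
  exact Finset.sum_le_sum fun i _ => mul_le_mul_of_nonneg_right (hc i) (mul_self_nonneg _)

lemma pencil_posDef [Nonempty n] {S D : Matrix n n ℝ} (hS : S.PosDef) (hD : D.IsHermitian)
    {δm : ℝ} (hroot : ∀ μ : ℝ, (S⁻¹ * D).charpoly.IsRoot μ → μ / 2 < δm) :
    ((2 * δm) • S - D).PosDef := by
  have hSpsd := hS.posSemidef
  set R : Matrix n n ℝ := CFC.sqrt S with hR
  have hRR : R * R = S := CFC.sqrt_mul_sqrt_self S hSpsd.nonneg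
  have hRherm : R.IsHermitian := (CFC.sqrt_nonneg S).posSemidef.1
  have hdetS : S.det ≠ 0 := ne_of_gt hS.det_pos
  have hdetR : IsUnit R.det := by
    have : R.det * R.det = S.det := by rw [← Matrix.det_mul, hRR]
    exact isUnit_iff_ne_zero.mpr fun h0 => hdetS (by rw [← this, h0, mul_zero])
  have hRinv : R * R⁻¹ = 1 := Matrix.mul_nonsing_inv R hdetR
  have hRinv' : R⁻¹ * R = 1 := Matrix.nonsing_inv_mul R hdetR
  have hRinvherm : (R⁻¹).IsHermitian := by
    unfold Matrix.IsHermitian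
    rw [Matrix.conjTranspose_nonsing_inv, hRherm.eq]
  set E : Matrix n n ℝ := R⁻¹ * D * R⁻¹ with hE
  have hEherm : E.IsHermitian := by
    unfold Matrix.IsHermitian
    rw [hE, Matrix.conjTranspose_mul, Matrix.conjTranspose_mul, hRinvherm.eq, hD.eq,
      Matrix.mul_assoc]
  have hSinv : S⁻¹ = R⁻¹ * R⁻¹ := by rw [← hRR, Matrix.mul_inv_rev]
  have hM2 : S⁻¹ * D * R⁻¹ = R⁻¹ * E := by rw [hSinv, hE]; noncomm_ring
  have hroots : ∀ i, hEherm.eigenvalues i < 2 * δm := by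
    intro i
    set u : n → ℝ := (WithLp.equiv 2 _) (hEherm.eigenvectorBasis i) with hu
    have hu0 : u ≠ 0 := by
      rw [hu]; simpa using hEherm.eigenvectorBasis.orthonormal.ne_zero i
    have huE : E *ᵥ u = hEherm.eigenvalues i • u := hEherm.mulVec_eigenvectorBasis i
    have hkey : (S⁻¹ * D) *ᵥ (R⁻¹ *ᵥ u) = hEherm.eigenvalues i • (R⁻¹ *ᵥ u) := by
      rw [Matrix.mulVec_mulVec, hM2, ← Matrix.mulVec_mulVec, huE, Matrix.mulVec_smul]
    have hnz : R⁻¹ *ᵥ u ≠ 0 := by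
      intro h0
      apply hu0
      have h1 : R *ᵥ (R⁻¹ *ᵥ u) = u := by
        rw [Matrix.mulVec_mulVec, hRinv, Matrix.one_mulVec]
      rw [h0, Matrix.mulVec_zero] at h1
      exact h1.symm
    have := hroot _ (isRoot_charpoly_of_eig _ hnz hkey)
    linarith
  have hST : Sᵀ = S := by rw [← Matrix.conjTranspose_eq_transpose_of_trivial, hS.1.eq]
  have hDT : Dᵀ = D := by rw [← Matrix.conjTranspose_eq_transpose_of_trivial, hD.eq]
  refine Matrix.PosDef.of_dotProduct_mulVec_pos ?_ ?_
  · show _ = _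
    rw [Matrix.conjTranspose_eq_transpose_of_trivial, Matrix.transpose_sub,
      Matrix.transpose_smul, hST, hDT]
  · intro v hv
    have hu : R *ᵥ v ≠ 0 := by
      intro h0
      apply hv
      have h1 : R⁻¹ *ᵥ (R *ᵥ v) = v := by rw [Matrix.mulVec_mulVec, hRinv', Matrix.one_mulVec]
      rw [h0, Matrix.mulVec_zero] at h1
      exact h1.symm
    set u : n → ℝ := R *ᵥ v with hud
    have hswap : ∀ z : n → ℝ, v ⬝ᵥ R *ᵥ z = u ⬝ᵥ z := by
      intro z
      rw [Matrix.dotProduct_mulVec]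
      congr 1
      have hRT : Rᵀ = R := by rw [← Matrix.conjTranspose_eq_transpose_of_trivial, hRherm.eq]
      conv_lhs => rw [← hRT]
      rw [Matrix.vecMul_transpose]
    have hvSv : v ⬝ᵥ S *ᵥ v = u ⬝ᵥ u := by
      rw [← hRR, ← Matrix.mulVec_mulVec, hswap, hud]
    have hDRER : D = R * E * R := by
      rw [hE]
      have hstep : R * (R⁻¹ * D * R⁻¹) * R = (R * R⁻¹) * D * (R⁻¹ * R) := by noncomm_ring
      rw [hstep, hRinv, hRinv', Matrix.one_mul, Matrix.mul_one]
    have hvDv : v ⬝ᵥ D *ᵥ v = u ⬝ᵥ E *ᵥ u := by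
      conv_lhs => rw [hDRER, ← Matrix.mulVec_mulVec, ← Matrix.mulVec_mulVec]
      rw [hswap, Matrix.mulVec_mulVec, ← Matrix.mulVec_mulVec, ← hud]
    set c : ℝ := Finset.univ.sup' Finset.univ_nonempty hEherm.eigenvalues with hc
    have hcle : ∀ i, hEherm.eigenvalues i ≤ c := fun i => Finset.le_sup' _ (Finset.mem_univ i)
    obtain ⟨i0, -, hi0⟩ := Finset.exists_mem_eq_sup' Finset.univ_nonempty hEherm.eigenvalues
    have hclt : c < 2 * δm := by rw [hc, hi0]; exact hroots i0
    have huu : 0 < u ⬝ᵥ u := by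
      have := Matrix.dotProduct_star_self_pos_iff (v := u)
      rw [star_trivial] at this
      exact this.mpr hu
    have hray : u ⬝ᵥ E *ᵥ u ≤ c * (u ⬝ᵥ u) := rayleigh_le hEherm hcle u
    have hfin : 0 < (2 * δm) * (v ⬝ᵥ S *ᵥ v) - v ⬝ᵥ D *ᵥ v := by
      rw [hvSv, hvDv]
      nlinarith
    rw [star_trivial, Matrix.sub_mulVec, dotProduct_sub, Matrix.smul_mulVec,
      dotProduct_smul]
    simpa using hfin

end SpectralAux

section QuadAux
variable {n : Type*} [Fintype n] [DecidableEq n]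

lemma single_dot_mulVec (Q : Matrix n n ℝ) (i j : n) :
    Pi.single i (1:ℝ) ⬝ᵥ Q *ᵥ Pi.single j 1 = Q i j := by
  rw [Matrix.mulVec_single]
  simp [dotProduct, Pi.single_apply]

lemma eq_zero_of_psd_nsd {Q : Matrix n n ℝ} (h1 : Q.PosSemidef) (h2 : (-Q).PosSemidef) :
    Q = 0 := by
  have hzero : ∀ x : n → ℝ, x ⬝ᵥ Q *ᵥ x = 0 := by
    intro x
    have a := h1.dotProduct_mulVec_nonneg x
    have b := h2.dotProduct_mulVec_nonneg x
    rw [star_trivial] at a b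
    rw [Matrix.neg_mulVec, dotProduct_neg] at b
    linarith
  have hsym : ∀ i j, Q j i = Q i j := by
    intro i j
    have := congrFun (congrFun h1.1.eq j) i
    simpa [Matrix.conjTranspose_apply] using this.symm
  ext i j
  by_cases hij : i = j
  · subst hij
    have h0 := hzero (Pi.single i 1)
    rw [single_dot_mulVec Q i i] at h0
    simpa using h0
  · have hx := hzero (Pi.single i 1 + Pi.single j 1)
    rw [Matrix.mulVec_add, dotProduct_add, add_dotProduct,
      add_dotProduct, single_dot_mulVec, single_dot_mulVec, single_dot_mulVec,
      single_dot_mulVec] at hx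
    have hii : Q i i = 0 := by
      have h0 := hzero (Pi.single i 1)
      rwa [single_dot_mulVec Q i i] at h0
    have hjj : Q j j = 0 := by
      have h0 := hzero (Pi.single j 1)
      rwa [single_dot_mulVec Q j j] at h0
    have := hsym i j
    simp only [Matrix.zero_apply]
    linarith

lemma dot_symm {Q : Matrix n n ℝ} (hQ : Q.IsHermitian) (x y : n → ℝ) :
    y ⬝ᵥ Q *ᵥ x = x ⬝ᵥ Q *ᵥ y := by
  have hQT : Qᵀ = Q := by rw [← Matrix.conjTranspose_eq_transpose_of_trivial, hQ.eq]
  rw [Matrix.dotProduct_mulVec]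
  conv_lhs => rw [← hQT]
  rw [Matrix.vecMul_transpose, dotProduct_comm]

lemma posdef_dot_pos {Q : Matrix n n ℝ} (h : Q.PosDef) {x : n → ℝ} (hx : x ≠ 0) :
    0 < x ⬝ᵥ Q *ᵥ x := by
  have := h.dotProduct_mulVec_pos hx
  rwa [star_trivial] at this

lemma posdef_eq_zero_of_dot {Q : Matrix n n ℝ} (h : Q.PosDef) {x : n → ℝ}
    (hx : x ⬝ᵥ Q *ᵥ x = 0) : x = 0 := by
  by_contra h0
  exact absurd hx (ne_of_gt (posdef_dot_pos h h0))

lemma psd_dot_nonneg {Q : Matrix n n ℝ} (h : Q.PosSemidef) (x : n → ℝ) :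
    0 ≤ x ⬝ᵥ Q *ᵥ x := by
  have := h.dotProduct_mulVec_nonneg x
  rwa [star_trivial] at this

lemma posSemidef_sum {ι : Type*} (s : Finset ι) (f : ι → Matrix n n ℝ)
    (h : ∀ i ∈ s, (f i).PosSemidef) : (∑ i ∈ s, f i).PosSemidef :=
  Finset.sum_induction f _ (fun _ _ ha hb => ha.add hb) (Matrix.PosSemidef.zero) h

lemma isHermitian_sum {ι : Type*} (s : Finset ι) (f : ι → Matrix n n ℝ)
    (h : ∀ i ∈ s, (f i).IsHermitian) : (∑ i ∈ s, f i).IsHermitian :=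
  Finset.sum_induction f _ (fun _ _ ha hb => ha.add hb) (Matrix.isHermitian_zero) h

end QuadAux

section AbsMAux
variable {d : ℕ} {Q : Matrix (Fin d) (Fin d) ℝ}

lemma absM_posSemidef (h : Q.PosSemidef ∨ (-Q).PosSemidef) : (absM Q).PosSemidef := by
  unfold absM
  split
  · assumption
  · rcases h with h | h
    · exact absurd h (by assumption)
    · exact h

lemma absM_isHermitian (h : Q.PosSemidef ∨ (-Q).PosSemidef) : (absM Q).IsHermitian :=
  (absM_posSemidef h).1

lemma absM_of_posSemidef (h : Q.PosSemidef) : absM Q = Q := if_pos h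

lemma absM_of_posDef (h : Q.PosDef) : absM Q = Q := if_pos h.posSemidef

lemma absM_of_negSemidef (h : (-Q).PosSemidef) (h0 : Q ≠ 0) : absM Q = -Q := by
  unfold absM
  rw [if_neg]
  intro hP
  exact h0 (eq_zero_of_psd_nsd hP h)

lemma not_posDef_zero (hd : 1 ≤ d) : ¬ (0 : Matrix (Fin d) (Fin d) ℝ).PosDef := by
  intro h
  have hx : (Pi.single (⟨0, hd⟩ : Fin d) (1:ℝ) : Fin d → ℝ) ≠ 0 := by
    intro h0
    have := congrFun h0 ⟨0, hd⟩
    simp at this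
  have := posdef_dot_pos h hx
  simp at this

lemma absM_of_negDef (hd : 1 ≤ d) (h : (-Q).PosDef) : absM Q = -Q := by
  unfold absM
  rw [if_neg]
  intro hP
  set x : Fin d → ℝ := Pi.single (⟨0, hd⟩ : Fin d) 1 with hxd
  have hx0 : x ≠ 0 := by
    intro h0
    have := congrFun h0 ⟨0, hd⟩
    simp [hxd] at this
  have a := psd_dot_nonneg hP x
  have b := posdef_dot_pos h hx0
  rw [Matrix.neg_mulVec, dotProduct_neg] at b
  linarith

lemma absM_sub_self (h : Q.PosSemidef ∨ (-Q).PosSemidef) :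
    absM Q - Q = (2:ℝ) • (if (-Q).PosSemidef ∧ Q ≠ 0 then absM Q else 0) := by
  by_cases hP : Q.PosSemidef
  · rw [absM_of_posSemidef hP, sub_self, if_neg, smul_zero]
    rintro ⟨h1, h2⟩
    exact h2 (eq_zero_of_psd_nsd hP h1)
  · have hN : (-Q).PosSemidef := h.resolve_left hP
    have h0 : Q ≠ 0 := by
      intro h0; apply hP; rw [h0]; exact Matrix.PosSemidef.zero
    rw [absM_of_negSemidef hN h0, if_pos ⟨hN, h0⟩]
    ext a b
    simp
    ring

end AbsMAux

section BlockAux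
variable {N d : ℕ}

/-- block of a stacked vector -/
def blk (v : Fin N × Fin d → ℝ) (i : Fin N) : Fin d → ℝ := fun a => v (i, a)

/-- The off-diagonal part of the Laplacian. -/
def offM (A : Fin N → Fin N → Matrix (Fin d) (Fin d) ℝ) :
    Matrix (Fin N × Fin d) (Fin N × Fin d) ℝ :=
  fun p q => if p.1 = q.1 then 0 else A p.1 q.1 p.2 q.2

lemma lap_eq (A : Fin N → Fin N → Matrix (Fin d) (Fin d) ℝ) :
    Lap A = _root_.blockDiag' (inDeg A) - offM A := by
  ext p q
  simp only [Lap, _root_.blockDiag', offM, inDeg, Matrix.sub_apply]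
  by_cases h : p.1 = q.1
  · rw [if_pos h, if_pos h, if_pos h, sub_zero]
  · rw [if_neg h, if_neg h, if_neg h, Matrix.neg_apply, zero_sub]

lemma blockDiag_mulVec (D : Fin N → Matrix (Fin d) (Fin d) ℝ) (v : Fin N × Fin d → ℝ)
    (i : Fin N) (a : Fin d) :
    (_root_.blockDiag' D *ᵥ v) (i, a) = ((D i) *ᵥ (blk v i)) a := by
  simp only [Matrix.mulVec, dotProduct, _root_.blockDiag', blk]
  rw [Fintype.sum_prod_type]
  rw [Finset.sum_eq_single i]
  · simp
  · intro j _ hj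
    simp [Ne.symm hj]
  · simp

lemma dot_blockDiag (D : Fin N → Matrix (Fin d) (Fin d) ℝ) (v : Fin N × Fin d → ℝ) :
    v ⬝ᵥ (_root_.blockDiag' D) *ᵥ v = ∑ i, blk v i ⬝ᵥ (D i) *ᵥ blk v i := by
  simp only [dotProduct]
  rw [Fintype.sum_prod_type]
  refine Finset.sum_congr rfl fun i _ => ?_
  refine Finset.sum_congr rfl fun a _ => ?_
  rw [blockDiag_mulVec]
  rfl

lemma offM_mulVec (A : Fin N → Fin N → Matrix (Fin d) (Fin d) ℝ) (v : Fin N × Fin d → ℝ)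
    (i : Fin N) (a : Fin d) :
    (offM A *ᵥ v) (i, a) = ∑ k ∈ Finset.univ.erase i, ((A i k) *ᵥ (blk v k)) a := by
  simp only [Matrix.mulVec, dotProduct, offM, blk]
  rw [Fintype.sum_prod_type]
  rw [← Finset.sum_erase (Finset.univ)
    (f := fun j => ∑ b, (if i = j then (0:ℝ) else A i j a b) * v (j, b)) (a := i) (by simp)]
  refine Finset.sum_congr rfl fun j hj => ?_
  refine Finset.sum_congr rfl fun b _ => ?_
  rw [if_neg (Ne.symm (Finset.ne_of_mem_erase hj))]

lemma dot_offM (A : Fin N → Fin N → Matrix (Fin d) (Fin d) ℝ) (v : Fin N × Fin d → ℝ) :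
    v ⬝ᵥ (offM A) *ᵥ v = ∑ i, ∑ k ∈ Finset.univ.erase i, blk v i ⬝ᵥ (A i k) *ᵥ blk v k := by
  simp only [dotProduct]
  rw [Fintype.sum_prod_type]
  refine Finset.sum_congr rfl fun i _ => ?_
  calc ∑ a, v (i, a) * (offM A *ᵥ v) (i, a)
      = ∑ a, ∑ k ∈ Finset.univ.erase i, v (i, a) * ((A i k) *ᵥ (blk v k)) a := by
        refine Finset.sum_congr rfl fun a _ => ?_
        rw [offM_mulVec, Finset.mul_sum]
    _ = ∑ k ∈ Finset.univ.erase i, ∑ a, v (i, a) * ((A i k) *ᵥ (blk v k)) a :=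
        Finset.sum_comm
    _ = _ := rfl

lemma sum_erase_comm (f : Fin N → Fin N → ℝ) :
    ∑ i, ∑ k ∈ Finset.univ.erase i, f i k = ∑ k, ∑ i ∈ Finset.univ.erase k, f i k := by
  have h1 : ∀ i : Fin N, ∑ k ∈ Finset.univ.erase i, f i k
      = ∑ k, if k = i then 0 else f i k := by
    intro i
    rw [← Finset.sum_erase (Finset.univ) (f := fun k => if k = i then 0 else f i k) (a := i)
      (by simp)]
    refine Finset.sum_congr rfl fun k hk => ?_
    rw [if_neg (Finset.ne_of_mem_erase hk)]
  have h2 : ∀ k : Fin N, ∑ i ∈ Finset.univ.erase k, f i k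
      = ∑ i, if k = i then 0 else f i k := by
    intro k
    rw [← Finset.sum_erase (Finset.univ) (f := fun i => if k = i then 0 else f i k) (a := k)
      (by simp)]
    refine Finset.sum_congr rfl fun i hi => ?_
    rw [if_neg (Ne.symm (Finset.ne_of_mem_erase hi))]
  simp only [h1, h2]
  exact Finset.sum_comm

lemma q_nonneg {Q : Matrix (Fin d) (Fin d) ℝ}
    (h : Q.PosSemidef ∨ (-Q).PosSemidef) (x y : Fin d → ℝ) :
    0 ≤ x ⬝ᵥ absM Q *ᵥ x + y ⬝ᵥ absM Q *ᵥ y - 2 * (x ⬝ᵥ Q *ᵥ y) := by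
  by_cases h0 : Q = 0
  · subst h0
    simp [absM]
  by_cases hP : Q.PosSemidef
  · rw [absM_of_posSemidef hP]
    have hkey := psd_dot_nonneg hP (x - y)
    rw [Matrix.mulVec_sub, dotProduct_sub, sub_dotProduct,
      sub_dotProduct] at hkey
    have hs := dot_symm hP.1 x y
    linarith
  · have hN : (-Q).PosSemidef := h.resolve_left hP
    rw [absM_of_negSemidef hN h0]
    have hkey := psd_dot_nonneg hN (x + y)
    rw [Matrix.mulVec_add, dotProduct_add, add_dotProduct,
      add_dotProduct] at hkey
    have hxQy : y ⬝ᵥ (-Q) *ᵥ x = x ⬝ᵥ (-Q) *ᵥ y := dot_symm hN.1 x y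
    rw [Matrix.neg_mulVec, dotProduct_neg, Matrix.neg_mulVec,
      dotProduct_neg] at hxQy
    simp only [Matrix.neg_mulVec, dotProduct_neg] at hkey ⊢
    linarith

lemma dot_sum_mulVec {n : Type*} [Fintype n] {ι : Type*} (s : Finset ι)
    (f : ι → Matrix n n ℝ) (x y : n → ℝ) :
    x ⬝ᵥ (∑ k ∈ s, f k) *ᵥ y = ∑ k ∈ s, x ⬝ᵥ (f k) *ᵥ y := by
  classical
  induction s using Finset.induction with
  | empty => simp
  | insert _ _ h ih =>
    rw [Finset.sum_insert h, Finset.sum_insert h, Matrix.add_mulVec, dotProduct_add, ih]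

lemma quad_identity (A : Fin N → Fin N → Matrix (Fin d) (Fin d) ℝ) (v : Fin N × Fin d → ℝ) :
    2 * (v ⬝ᵥ (Lap A) *ᵥ v)
      = (∑ i, ∑ k ∈ Finset.univ.erase i,
          (blk v i ⬝ᵥ absM (A i k) *ᵥ blk v i + blk v k ⬝ᵥ absM (A i k) *ᵥ blk v k
            - 2 * (blk v i ⬝ᵥ (A i k) *ᵥ blk v k)))
        + ∑ i, blk v i ⬝ᵥ (inDeg A i - outDeg A i) *ᵥ blk v i := by
  have hL : v ⬝ᵥ (Lap A) *ᵥ v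
      = (∑ i, blk v i ⬝ᵥ (inDeg A i) *ᵥ blk v i)
        - ∑ i, ∑ k ∈ Finset.univ.erase i, blk v i ⬝ᵥ (A i k) *ᵥ blk v k := by
    rw [lap_eq, Matrix.sub_mulVec, dotProduct_sub, dot_blockDiag, dot_offM]
  have e1 : ∀ i, ∑ k ∈ Finset.univ.erase i, blk v i ⬝ᵥ absM (A i k) *ᵥ blk v i
      = blk v i ⬝ᵥ inDeg A i *ᵥ blk v i := by
    intro i
    rw [inDeg, dot_sum_mulVec]
  have e2 : ∑ i, ∑ k ∈ Finset.univ.erase i, blk v k ⬝ᵥ absM (A i k) *ᵥ blk v k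
      = ∑ i, blk v i ⬝ᵥ outDeg A i *ᵥ blk v i := by
    rw [sum_erase_comm (fun i k => blk v k ⬝ᵥ absM (A i k) *ᵥ blk v k)]
    refine Finset.sum_congr rfl fun k _ => ?_
    rw [outDeg, dot_sum_mulVec]
  have e3 : ∀ i, blk v i ⬝ᵥ (inDeg A i - outDeg A i) *ᵥ blk v i
      = blk v i ⬝ᵥ inDeg A i *ᵥ blk v i - blk v i ⬝ᵥ outDeg A i *ᵥ blk v i := by
    intro i
    rw [Matrix.sub_mulVec, dotProduct_sub]
  have expand : (∑ i, ∑ k ∈ Finset.univ.erase i,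
          (blk v i ⬝ᵥ absM (A i k) *ᵥ blk v i + blk v k ⬝ᵥ absM (A i k) *ᵥ blk v k
            - 2 * (blk v i ⬝ᵥ (A i k) *ᵥ blk v k)))
      = (∑ i, blk v i ⬝ᵥ inDeg A i *ᵥ blk v i)
        + (∑ i, blk v i ⬝ᵥ outDeg A i *ᵥ blk v i)
        - 2 * ∑ i, ∑ k ∈ Finset.univ.erase i, blk v i ⬝ᵥ (A i k) *ᵥ blk v k := by
    have : ∀ i : Fin N, ∑ k ∈ Finset.univ.erase i,
        (blk v i ⬝ᵥ absM (A i k) *ᵥ blk v i + blk v k ⬝ᵥ absM (A i k) *ᵥ blk v k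
          - 2 * (blk v i ⬝ᵥ (A i k) *ᵥ blk v k))
        = (∑ k ∈ Finset.univ.erase i, blk v i ⬝ᵥ absM (A i k) *ᵥ blk v i)
          + (∑ k ∈ Finset.univ.erase i, blk v k ⬝ᵥ absM (A i k) *ᵥ blk v k)
          - 2 * ∑ k ∈ Finset.univ.erase i, blk v i ⬝ᵥ (A i k) *ᵥ blk v k := by
      intro i
      rw [Finset.sum_sub_distrib, Finset.sum_add_distrib, ← Finset.mul_sum]
    simp only [this]
    rw [Finset.sum_sub_distrib, Finset.sum_add_distrib, ← Finset.mul_sum]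
    rw [e2]
    congr 1
    congr 1
    exact Finset.sum_congr rfl fun i _ => e1 i
  rw [hL, expand]
  simp only [e3]
  rw [Finset.sum_sub_distrib]
  ring

end BlockAux


section ModeBound

lemma dot_transpose {n : Type*} [Fintype n] (M : Matrix n n ℝ) (x : n → ℝ) :
    x ⬝ᵥ Mᵀ *ᵥ x = x ⬝ᵥ M *ᵥ x := by
  rw [Matrix.dotProduct_mulVec, Matrix.vecMul_transpose, dotProduct_comm]

lemma mode_bound {N d : ℕ} (hN : 1 ≤ N) (hd : 1 ≤ d)
    (A : Fin N → Fin N → Matrix (Fin d) (Fin d) ℝ) (hA : SignedWeights A)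
    (V1 V2 : Finset (Fin N)) (hAss : Assumption1 A V1 V2)
    (hPD : ∀ i ∈ V1, (∑ j ∈ OmegaSet A i, absM (A i j)).PosDef)
    (δm : ℝ) (hδm : 0 < δm)
    (hroot : ∀ i ∈ V1, ∀ μ : ℝ,
      (((∑ j ∈ OmegaSet A i, absM (A i j))⁻¹ * (outDeg A i - inDeg A i)).charpoly).IsRoot μ →
        μ / 2 < δm)
    (δi : Fin N → ℝ) (hδi : ∀ i, δi i = if (OmegaSet A i).Nonempty then δm else 0)
    (B : Fin N → Matrix (Fin d) (Fin d) ℝ) (hB : ∀ i, B i = ∑ j ∈ OmegaSet A i, absM (A i j))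
    (LB : Matrix (Fin N × Fin d) (Fin N × Fin d) ℝ)
    (hLB : LB = Lap A + _root_.blockDiag' fun i => δi i • B i) :
    ∃ c : ℝ, 0 < c ∧ ∀ v : Fin N × Fin d → ℝ, c * (v ⬝ᵥ v) ≤ v ⬝ᵥ LB *ᵥ v := by
  have hdne : Nonempty (Fin d) := ⟨⟨0, hd⟩⟩
  have hNne : Nonempty (Fin N) := ⟨⟨0, hN⟩⟩
  have hNdne : Nonempty (Fin N × Fin d) := ⟨(⟨0, hN⟩, ⟨0, hd⟩)⟩
  obtain ⟨hV12, hV12disj, hpath, hdom⟩ := hAss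
  have hmemV : ∀ i : Fin N, i ∈ V1 ∨ i ∈ V2 := by
    intro i
    have : i ∈ V1 ∪ V2 := by rw [hV12]; exact Finset.mem_univ i
    exact Finset.mem_union.mp this
  have hsw : ∀ i k : Fin N, k ≠ i → (A i k).PosSemidef ∨ (-(A i k)).PosSemidef :=
    fun i k h => (hA i k (Ne.symm h)).2
  have hBpsd : ∀ i, (B i).PosSemidef := by
    intro i
    rw [hB i]
    apply _root_.posSemidef_sum
    intro j hj
    obtain ⟨-, hns, -⟩ := Finset.mem_filter.mp hj
    exact absM_posSemidef (Or.inr hns)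
  have hInherm : ∀ i, (inDeg A i).IsHermitian := by
    intro i
    exact isHermitian_sum _ _ fun k hk =>
      absM_isHermitian (hsw i k (Finset.ne_of_mem_erase hk))
  have hOutherm : ∀ i, (outDeg A i).IsHermitian := by
    intro i
    exact isHermitian_sum _ _ fun k hk =>
      absM_isHermitian (hA k i (Finset.ne_of_mem_erase hk)).2
  have hΩne : ∀ i ∈ V1, (OmegaSet A i).Nonempty := by
    intro i hi
    by_contra h
    rw [Finset.not_nonempty_iff_eq_empty] at h
    have hP := hPD i hi
    rw [h, Finset.sum_empty] at hP
    exact not_posDef_zero hd hP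
  have hδieq : ∀ i ∈ V1, δi i = δm := fun i hi => by rw [hδi i, if_pos (hΩne i hi)]
  have hδinn : ∀ i, 0 ≤ δi i := by
    intro i
    rw [hδi i]
    split
    · exact le_of_lt hδm
    · exact le_refl 0
  have hM1 : ∀ i ∈ V1, ((2 * δm) • B i - (outDeg A i - inDeg A i)).PosDef := by
    intro i hi
    have hS : (B i).PosDef := by rw [hB i]; exact hPD i hi
    have hD : (outDeg A i - inDeg A i).IsHermitian := (hOutherm i).sub (hInherm i)
    refine pencil_posDef hS hD ?_
    intro μ hμ
    refine hroot i hi μ ?_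
    rwa [hB i] at hμ
  -- the quadratic-form decomposition of `LB`
  have hLBv : ∀ v : Fin N × Fin d → ℝ, v ⬝ᵥ LB *ᵥ v
      = v ⬝ᵥ Lap A *ᵥ v + ∑ i, δi i * (blk v i ⬝ᵥ (B i) *ᵥ blk v i) := by
    intro v
    rw [hLB, Matrix.add_mulVec, dotProduct_add, dot_blockDiag]
    congr 1
    refine Finset.sum_congr rfl fun i _ => ?_
    rw [Matrix.smul_mulVec, dotProduct_smul, smul_eq_mul]
  set Qt : (Fin N × Fin d → ℝ) → Fin N → Fin N → ℝ := fun v i k =>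
    blk v i ⬝ᵥ absM (A i k) *ᵥ blk v i + blk v k ⬝ᵥ absM (A i k) *ᵥ blk v k
      - 2 * (blk v i ⬝ᵥ (A i k) *ᵥ blk v k) with hQt
  set Tt : (Fin N × Fin d → ℝ) → Fin N → ℝ := fun v i =>
    blk v i ⬝ᵥ (inDeg A i - outDeg A i) *ᵥ blk v i
      + 2 * (δi i * (blk v i ⬝ᵥ (B i) *ᵥ blk v i)) with hTt
  have hdecomp : ∀ v : Fin N × Fin d → ℝ, 2 * (v ⬝ᵥ LB *ᵥ v)
      = (∑ i, ∑ k ∈ Finset.univ.erase i, Qt v i k) + ∑ i, Tt v i := by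
    intro v
    rw [hLBv v, mul_add, quad_identity A v]
    simp only [hQt, hTt, Finset.sum_add_distrib, Finset.mul_sum]
    ring
  have hQnn : ∀ v, ∀ i, ∀ k ∈ Finset.univ.erase i, 0 ≤ Qt v i k := by
    intro v i k hk
    exact q_nonneg (hsw i k (Finset.ne_of_mem_erase hk)) _ _
  have hQnn' : ∀ v, 0 ≤ ∑ i, ∑ k ∈ Finset.univ.erase i, Qt v i k :=
    fun v => Finset.sum_nonneg fun i _ => Finset.sum_nonneg fun k hk => hQnn v i k hk
  have hT1 : ∀ v, ∀ i ∈ V1, Tt v i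
      = blk v i ⬝ᵥ ((2 * δm) • B i - (outDeg A i - inDeg A i)) *ᵥ blk v i := by
    intro v i hi
    rw [hTt]
    simp only
    rw [hδieq i hi, Matrix.sub_mulVec, Matrix.sub_mulVec, dotProduct_sub,
      dotProduct_sub, Matrix.smul_mulVec, dotProduct_smul, smul_eq_mul,
      Matrix.sub_mulVec, dotProduct_sub]
    ring
  have hTnn : ∀ v, ∀ i, 0 ≤ Tt v i := by
    intro v i
    rcases hmemV i with hi | hi
    · rw [hT1 v i hi]
      exact psd_dot_nonneg (hM1 i hi).posSemidef _
    · have h1 : 0 ≤ blk v i ⬝ᵥ (inDeg A i - outDeg A i) *ᵥ blk v i :=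
        psd_dot_nonneg (hdom i hi) _
      have h2 : 0 ≤ δi i * (blk v i ⬝ᵥ (B i) *ᵥ blk v i) :=
        mul_nonneg (hδinn i) (psd_dot_nonneg (hBpsd i) _)
      rw [hTt]
      simp only
      linarith
  have hTnn' : ∀ v, 0 ≤ ∑ i, Tt v i := fun v => Finset.sum_nonneg fun i _ => hTnn v i
  -- strict positivity
  have hquad : ∀ v : Fin N × Fin d → ℝ, v ≠ 0 → 0 < v ⬝ᵥ LB *ᵥ v := by
    intro v hv
    by_contra hle
    push_neg at hle
    have htot0 : (∑ i, ∑ k ∈ Finset.univ.erase i, Qt v i k) + ∑ i, Tt v i = 0 := by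
      have := hdecomp v
      have h2 : 2 * (v ⬝ᵥ LB *ᵥ v) ≤ 0 := by linarith
      have h3 : 0 ≤ (∑ i, ∑ k ∈ Finset.univ.erase i, Qt v i k) + ∑ i, Tt v i :=
        add_nonneg (hQnn' v) (hTnn' v)
      linarith
    have hQsum0 : ∑ i, ∑ k ∈ Finset.univ.erase i, Qt v i k = 0 := by
      have := hQnn' v; have := hTnn' v; linarith
    have hTsum0 : ∑ i, Tt v i = 0 := by
      have := hQnn' v; have := hTnn' v; linarith
    have hT0 : ∀ i : Fin N, Tt v i = 0 := by
      have := (Finset.sum_eq_zero_iff_of_nonneg (fun i _ => hTnn v i)).mp hTsum0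
      exact fun i => this i (Finset.mem_univ i)
    have hQ0 : ∀ i : Fin N, ∀ k ∈ Finset.univ.erase i, Qt v i k = 0 := by
      have houter := (Finset.sum_eq_zero_iff_of_nonneg
        (fun i _ => Finset.sum_nonneg fun k hk => hQnn v i k hk)).mp hQsum0
      intro i k hk
      have hinner := (Finset.sum_eq_zero_iff_of_nonneg
        (fun k hk => hQnn v i k hk)).mp (houter i (Finset.mem_univ i))
      exact hinner k hk
    have hblkV1 : ∀ i ∈ V1, blk v i = 0 := by
      intro i hi
      have h0 : blk v i ⬝ᵥ ((2 * δm) • B i - (outDeg A i - inDeg A i)) *ᵥ blk v i = 0 := by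
        rw [← hT1 v i hi]; exact hT0 i
      exact posdef_eq_zero_of_dot (hM1 i hi) h0
    have hblk0 : ∀ i : Fin N, blk v i = 0 := by
      intro i
      rcases hmemV i with hi | hi
      · exact hblkV1 i hi
      · obtain ⟨i1, hi1, m, hm, p, hp0, hpl, hedge⟩ := hpath i hi
        have hstep : ∀ s : Fin (m + 1), blk v (p s) = 0 := by
          intro s
          induction s using Fin.induction with
          | zero => rw [hp0]; exact hblkV1 i1 hi1
          | succ s ih =>
            by_cases hab : p s.succ = p s.castSucc
            · rw [hab]; exact ih
            · have hmem : p s.castSucc ∈ Finset.univ.erase (p s.succ) :=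
                Finset.mem_erase.mpr ⟨fun h => hab h.symm, Finset.mem_univ _⟩
              have hq := hQ0 (p s.succ) (p s.castSucc) hmem
              rw [hQt] at hq
              simp only at hq
              rw [ih] at hq
              have habs : (absM (A (p s.succ) (p s.castSucc))).PosDef := by
                rcases hedge s with he | he
                · rw [absM_of_posDef he]; exact he
                · rw [absM_of_negDef hd he]; exact he
              refine posdef_eq_zero_of_dot habs ?_
              simpa using hq
        have := hstep (Fin.last m)
        rwa [hpl] at this
    apply hv
    funext pq
    have := congrFun (hblk0 pq.1) pq.2
    simpa [blk] using this
  -- quantitative bound via the symmetrised matrix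
  have hQherm : (LB + LBᵀ).IsHermitian := by
    show _ = _
    rw [Matrix.conjTranspose_eq_transpose_of_trivial, Matrix.transpose_add,
      Matrix.transpose_transpose, add_comm]
  have hQpd : (LB + LBᵀ).PosDef := by
    refine Matrix.PosDef.of_dotProduct_mulVec_pos hQherm fun x hx => ?_
    rw [star_trivial, Matrix.add_mulVec, dotProduct_add, dot_transpose]
    have := hquad x hx
    linarith
  set cQ : ℝ := Finset.univ.inf' Finset.univ_nonempty hQpd.1.eigenvalues with hcQ
  have hcle : ∀ i, cQ ≤ hQpd.1.eigenvalues i := fun i => Finset.inf'_le _ (Finset.mem_univ i)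
  obtain ⟨i0, -, hi0⟩ := Finset.exists_mem_eq_inf' Finset.univ_nonempty hQpd.1.eigenvalues
  have hcpos : 0 < cQ := by rw [hcQ, hi0]; exact hQpd.eigenvalues_pos i0
  refine ⟨cQ / 2, by positivity, fun v => ?_⟩
  have hray := rayleigh_ge hQpd.1 hcle v
  have heq : v ⬝ᵥ (LB + LBᵀ) *ᵥ v = 2 * (v ⬝ᵥ LB *ᵥ v) := by
    rw [Matrix.add_mulVec, dotProduct_add, dot_transpose]
    ring
  rw [heq] at hray
  linarith

end ModeBound


section Equilibrium

lemma sum_mulVec_apply {n : Type*} [Fintype n] {ι : Type*} (s : Finset ι)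
    (f : ι → Matrix n n ℝ) (x : n → ℝ) (a : n) :
    ((∑ k ∈ s, f k) *ᵥ x) a = ∑ k ∈ s, ((f k) *ᵥ x) a := by
  classical
  induction s using Finset.induction with
  | empty => simp
  | insert _ _ h ih =>
    rw [Finset.sum_insert h, Finset.sum_insert h, Matrix.add_mulVec, Pi.add_apply, ih]

lemma deg_sub_sum {N d : ℕ} (A : Fin N → Fin N → Matrix (Fin d) (Fin d) ℝ)
    (hA : SignedWeights A) (i : Fin N) :
    inDeg A i - ∑ k ∈ Finset.univ.erase i, A i k
      = (2:ℝ) • ∑ j ∈ OmegaSet A i, absM (A i j) := by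
  rw [inDeg, ← Finset.sum_sub_distrib]
  have hterm : ∀ k ∈ Finset.univ.erase i, absM (A i k) - A i k
      = (2:ℝ) • (if (-(A i k)).PosSemidef ∧ A i k ≠ 0 then absM (A i k) else 0) := by
    intro k hk
    exact absM_sub_self ((hA i k (Ne.symm (Finset.ne_of_mem_erase hk))).2)
  rw [Finset.sum_congr rfl hterm, ← Finset.smul_sum]
  congr 1
  rw [OmegaSet, Finset.sum_filter]

lemma equilibrium {N d : ℕ} (A : Fin N → Fin N → Matrix (Fin d) (Fin d) ℝ)
    (hA : SignedWeights A) {δm : ℝ} (hδm : δm ≠ 0)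
    (δi : Fin N → ℝ) (hδi : ∀ i, δi i = if (OmegaSet A i).Nonempty then δm else 0)
    (B : Fin N → Matrix (Fin d) (Fin d) ℝ) (hB : ∀ i, B i = ∑ j ∈ OmegaSet A i, absM (A i j))
    (θ : Fin d → ℝ) :
    (Lap A + _root_.blockDiag' fun i => δi i • B i) *ᵥ (fun p : Fin N × Fin d => θ p.2)
      = fun p => ((δi p.1 • B p.1) *ᵥ ((1 + 2 / δm) • θ)) p.2 := by
  funext p
  obtain ⟨i, a⟩ := p
  rw [Matrix.add_mulVec, Pi.add_apply, lap_eq, Matrix.sub_mulVec, Pi.sub_apply,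
    blockDiag_mulVec, offM_mulVec, blockDiag_mulVec]
  have hblk : ∀ k : Fin N, blk (fun p : Fin N × Fin d => θ p.2) k = θ := fun k => rfl
  simp only [hblk]
  have hsum : ∑ k ∈ Finset.univ.erase i, ((A i k) *ᵥ θ) a
      = ((∑ k ∈ Finset.univ.erase i, A i k) *ᵥ θ) a := (sum_mulVec_apply _ _ _ _).symm
  rw [hsum]
  have hkey : (inDeg A i *ᵥ θ) a - ((∑ k ∈ Finset.univ.erase i, A i k) *ᵥ θ) a
      = (((2:ℝ) • B i) *ᵥ θ) a := by
    rw [← Pi.sub_apply, ← Matrix.sub_mulVec, deg_sub_sum A hA i, ← hB i]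
  rw [hkey]
  by_cases hΩ : (OmegaSet A i).Nonempty
  · have hδieq : δi i = δm := by rw [hδi i, if_pos hΩ]
    rw [hδieq, Matrix.smul_mulVec, Matrix.smul_mulVec, Matrix.mulVec_smul,
      Matrix.smul_mulVec]
    simp only [Pi.smul_apply, smul_eq_mul]
    field_simp
    ring
  · have hδieq : δi i = 0 := by rw [hδi i, if_neg hΩ]
    have hBi : B i = 0 := by
      rw [hB i, Finset.not_nonempty_iff_eq_empty.mp hΩ, Finset.sum_empty]
    rw [hδieq, hBi]
    simp

end Equilibrium

/-- Theorem 4: non-trivial consensus under switching topologies.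
Each topology `A^{(m)}` satisfies Assumption 1 and the coupling strength `δ^{(m)}`
exceeds `max(0, max_{i∈V1^{(m)}} C_i^{(m)})`, expressed by requiring
`δ^{(m)} > μ/2` for every (real) eigenvalue `μ` of the indicated matrices (all of
whose eigenvalues are real). A continuous solution of the switched system with the
designed inputs converges to `1_N ⊗ θ`. -/
theorem stmt14 (N d M : ℕ) (hN : 1 ≤ N) (hd : 1 ≤ d)
    (θ : Fin d → ℝ) (hθ : θ ≠ 0)
    (A : Fin M → Fin N → Fin N → Matrix (Fin d) (Fin d) ℝ)
    (hA : ∀ m, SignedWeights (A m))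
    (V1 V2 : Fin M → Finset (Fin N))
    (hAss : ∀ m, Assumption1 (A m) (V1 m) (V2 m))
    (hPD : ∀ m, ∀ i ∈ V1 m, (∑ j ∈ OmegaSet (A m) i, absM (A m i j)).PosDef)
    (δ : Fin M → ℝ) (hδ : ∀ m, 0 < δ m)
    (hδC : ∀ m, ∀ i ∈ V1 m, ∀ μ : ℝ,
      (((∑ j ∈ OmegaSet (A m) i, absM (A m i j))⁻¹ *
        (outDeg (A m) i - inDeg (A m) i)).charpoly).IsRoot μ → μ / 2 < δ m)
    (δi : Fin M → Fin N → ℝ)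
    (hδi : ∀ m i, δi m i = if (OmegaSet (A m) i).Nonempty then δ m else 0)
    (B : Fin M → Fin N → Matrix (Fin d) (Fin d) ℝ)
    (hB : ∀ m i, B m i = ∑ j ∈ OmegaSet (A m) i, absM (A m i j))
    (x₀ : Fin M → Fin d → ℝ) (hx₀ : ∀ m, x₀ m = (1 + 2 / δ m) • θ)
    (LB : Fin M → Matrix (Fin N × Fin d) (Fin N × Fin d) ℝ)
    (hLB : ∀ m, LB m = Lap (A m) + blockDiag' fun i => δi m i • B m i)
    (b : Fin M → Fin N × Fin d → ℝ)
    (hb : ∀ m, b m = fun p => ((δi m p.1 • B m p.1).mulVec (x₀ m)) p.2)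
    (α : ℝ) (hα : 0 < α)
    (tk : ℕ → ℝ) (htk0 : tk 0 = 0) (hmono : StrictMono tk)
    (hgap : ∀ k, α ≤ tk (k + 1) - tk k) (htop : Tendsto tk atTop atTop)
    (σ : ℕ → Fin M)
    (x : ℝ → (Fin N × Fin d → ℝ))
    (hcont : ContinuousOn x (Set.Ici (0 : ℝ)))
    (hode : ∀ k : ℕ, ∀ t ∈ Set.Ioo (tk k) (tk (k + 1)),
      HasDerivAt x (-((LB (σ k)).mulVec (x t)) + b (σ k)) t) :
    Tendsto x atTop (nhds fun p => θ p.2) := by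
  have hMne : Nonempty (Fin M) := ⟨σ 0⟩
  have hc : ∀ m, ∃ c : ℝ, 0 < c ∧
      ∀ v : Fin N × Fin d → ℝ, c * (v ⬝ᵥ v) ≤ v ⬝ᵥ (LB m) *ᵥ v := by
    intro m
    exact mode_bound hN hd (A m) (hA m) (V1 m) (V2 m) (hAss m) (hPD m) (δ m) (hδ m)
      (hδC m) (δi m) (hδi m) (B m) (hB m) (LB m) (hLB m)
  choose c hcpos hcineq using hc
  set c0 : ℝ := Finset.univ.inf' Finset.univ_nonempty c with hc0
  have hc0le : ∀ m, c0 ≤ c m := fun m => Finset.inf'_le _ (Finset.mem_univ m)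
  have hc0pos : 0 < c0 := by
    obtain ⟨m0, -, hm0⟩ := Finset.exists_mem_eq_inf' (Finset.univ_nonempty (α := Fin M)) c
    rw [hc0, hm0]
    exact hcpos m0
  set κ : ℝ := 2 * c0 with hκdef
  have hκ : 0 < κ := by positivity
  set xs : Fin N × Fin d → ℝ := fun p => θ p.2 with hxs
  have hequil : ∀ m, (LB m) *ᵥ xs = b m := by
    intro m
    rw [hLB m, hb m, hx₀ m]
    exact equilibrium (A m) (hA m) (ne_of_gt (hδ m)) (δi m) (hδi m) (B m) (hB m) θ
  set g : ℝ → ℝ := fun t => ∑ p : Fin N × Fin d, (x t p - xs p)^2 with hg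
  have hgnn : ∀ t, 0 ≤ g t := fun t => Finset.sum_nonneg fun p _ => sq_nonneg _
  have hgsq : ∀ t p, (x t p - xs p)^2 ≤ g t := fun t p =>
    Finset.single_le_sum (f := fun p => (x t p - xs p)^2) (fun q _ => sq_nonneg _)
      (Finset.mem_univ p)
  have hgcont : ContinuousOn g (Set.Ici (0:ℝ)) := by
    apply continuousOn_finset_sum
    intro p _
    exact (((continuous_apply p).comp_continuousOn hcont).sub continuousOn_const).pow 2
  have hgd : ∀ k : ℕ, ∀ t ∈ Set.Ioo (tk k) (tk (k+1)),
      ∃ g' : ℝ, HasDerivAt g g' t ∧ g' ≤ -κ * g t := by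
    intro k t ht
    have hx' := hode k t ht
    set e : Fin N × Fin d → ℝ := fun p => x t p - xs p with he
    have hVe : -((LB (σ k)).mulVec (x t)) + b (σ k) = -((LB (σ k)) *ᵥ e) := by
      rw [← hequil (σ k)]
      have hesub : e = x t - xs := by funext q; simp [he]
      have h1 : (LB (σ k)) *ᵥ e = (LB (σ k)) *ᵥ (x t) - (LB (σ k)) *ᵥ xs := by
        rw [hesub, Matrix.mulVec_sub]
      rw [h1]
      funext q
      simp only [Pi.add_apply, Pi.neg_apply, Pi.sub_apply]
      ring
    rw [hVe] at hx'
    have hder : HasDerivAt g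
        (∑ p : Fin N × Fin d, (2:ℕ) * (x t p - xs p)^(2-1) * (-((LB (σ k)) *ᵥ e)) p) t :=
      HasDerivAt.fun_sum fun p _ => (((hasDerivAt_pi.mp hx') p).sub_const (xs p)).pow 2
    refine ⟨_, hder, ?_⟩
    have hEE : e ⬝ᵥ e = g t := by
      rw [hg]
      refine Finset.sum_congr rfl fun p _ => ?_
      simp [he, dotProduct]
      ring
    have hsum2 : (∑ p : Fin N × Fin d, (2:ℕ) * (x t p - xs p)^(2-1) * (-((LB (σ k)) *ᵥ e)) p)
        = 2 * (e ⬝ᵥ (-((LB (σ k)) *ᵥ e))) := by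
      rw [dotProduct, Finset.mul_sum]
      refine Finset.sum_congr rfl fun p _ => ?_
      simp [he]
      ring
    rw [hsum2, dotProduct_neg]
    have h1 : c (σ k) * (e ⬝ᵥ e) ≤ e ⬝ᵥ (LB (σ k)) *ᵥ e := hcineq (σ k) e
    have h2 : c0 * (e ⬝ᵥ e) ≤ c (σ k) * (e ⬝ᵥ e) := by
      apply mul_le_mul_of_nonneg_right (hc0le _)
      rw [hEE]
      exact hgnn t
    rw [hκdef]
    rw [hEE] at h1 h2
    linarith
  set hh : ℝ → ℝ := fun t => g t * Real.exp (κ * t) with hhh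
  have htk0le : ∀ k, (0:ℝ) ≤ tk k := fun k => htk0 ▸ hmono.monotone (Nat.zero_le k)
  have hanti : ∀ k, AntitoneOn hh (Set.Icc (tk k) (tk (k+1))) := by
    intro k
    have hsub : Set.Icc (tk k) (tk (k+1)) ⊆ Set.Ici (0:ℝ) := fun t ht =>
      le_trans (htk0le k) ht.1
    apply antitoneOn_of_deriv_nonpos (convex_Icc _ _)
    · exact (hgcont.mono hsub).mul
        ((Real.continuous_exp.comp (continuous_const.mul continuous_id)).continuousOn)
    · rw [interior_Icc]
      intro t ht
      obtain ⟨g', hg', -⟩ := hgd k t ht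
      have hexp : HasDerivAt (fun y => Real.exp (κ * y)) (Real.exp (κ * t) * (κ * 1)) t :=
        (Real.hasDerivAt_exp (κ*t)).comp t ((hasDerivAt_id t).const_mul κ)
      exact ((hg'.mul hexp).differentiableAt).differentiableWithinAt
    · rw [interior_Icc]
      intro t ht
      obtain ⟨g', hg', hb'⟩ := hgd k t ht
      have hexp : HasDerivAt (fun y => Real.exp (κ * y)) (Real.exp (κ * t) * (κ * 1)) t :=
        (Real.hasDerivAt_exp (κ*t)).comp t ((hasDerivAt_id t).const_mul κ)
      have hdh : HasDerivAt hh (g' * Real.exp (κ * t) + g t * (Real.exp (κ * t) * (κ * 1))) t :=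
        hg'.mul hexp
      rw [hdh.deriv]
      have hepos := Real.exp_pos (κ * t)
      have hstep : g' * Real.exp (κ * t) + g t * (Real.exp (κ * t) * (κ * 1))
          = (g' + κ * g t) * Real.exp (κ * t) := by ring
      rw [hstep]
      apply mul_nonpos_of_nonpos_of_nonneg
      · linarith
      · exact le_of_lt hepos
  have hchain : ∀ k : ℕ, ∀ t ∈ Set.Icc (0:ℝ) (tk k), hh t ≤ hh 0 := by
    intro k
    induction k with
    | zero =>
      intro t ht
      rw [htk0] at ht
      have : t = 0 := le_antisymm ht.2 ht.1
      rw [this]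
    | succ k ih =>
      intro t ht
      rcases le_or_gt t (tk k) with h1 | h1
      · exact ih t ⟨ht.1, h1⟩
      · have h2 : hh t ≤ hh (tk k) :=
          hanti k ⟨le_refl _, le_of_lt (hmono (Nat.lt_succ_self k))⟩
            ⟨le_of_lt h1, ht.2⟩ (le_of_lt h1)
        exact le_trans h2 (ih (tk k) ⟨htk0le k, le_refl _⟩)
  have hhb : ∀ t : ℝ, 0 ≤ t → hh t ≤ hh 0 := by
    intro t ht
    obtain ⟨k, hk⟩ := (htop.eventually_ge_atTop t).exists
    exact hchain k t ⟨ht, hk⟩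
  have hgb : ∀ t : ℝ, 0 ≤ t → g t ≤ hh 0 * Real.exp (-(κ * t)) := by
    intro t ht
    have h1 := hhb t ht
    have hrw : g t = (g t * Real.exp (κ * t)) * Real.exp (-(κ * t)) := by
      rw [mul_assoc, ← Real.exp_add]
      simp
    rw [hrw]
    exact mul_le_mul_of_nonneg_right h1 (le_of_lt (Real.exp_pos _))
  have hgtend : Tendsto g atTop (nhds 0) := by
    have h2 : Tendsto (fun t : ℝ => Real.exp (-(κ * t))) atTop (nhds 0) := by
      have h3 : Tendsto (fun t : ℝ => κ * t) atTop atTop := by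
        simpa using Filter.Tendsto.const_mul_atTop hκ (tendsto_id (α := ℝ))
      exact Real.tendsto_exp_neg_atTop_nhds_zero.comp h3
    have hup : Tendsto (fun t => hh 0 * Real.exp (-(κ * t))) atTop (nhds 0) := by
      have := h2.const_mul (hh 0)
      simpa using this
    apply tendsto_of_tendsto_of_tendsto_of_le_of_le' tendsto_const_nhds hup
    · exact Filter.Eventually.of_forall hgnn
    · exact (Filter.eventually_ge_atTop (0:ℝ)).mono hgb
  have hgoal : Tendsto x atTop (nhds xs) := by
    rw [tendsto_pi_nhds]
    intro p
    have hsq : Tendsto (fun t => (x t p - xs p)^2) atTop (nhds 0) := by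
      apply tendsto_of_tendsto_of_tendsto_of_le_of_le' tendsto_const_nhds hgtend
      · exact Filter.Eventually.of_forall fun t => sq_nonneg _
      · exact Filter.Eventually.of_forall fun t => hgsq t p
    have habs : Tendsto (fun t => |x t p - xs p|) atTop (nhds 0) := by
      have hsqrt : Tendsto Real.sqrt (nhds 0) (nhds (Real.sqrt 0)) :=
        Real.continuous_sqrt.continuousAt.tendsto
      have := hsqrt.comp hsq
      simpa [Function.comp_def, Real.sqrt_sq_eq_abs, Real.sqrt_zero] using this
    have hdiff : Tendsto (fun t => x t p - xs p) atTop (nhds 0) :=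
      (tendsto_zero_iff_abs_tendsto_zero _).mpr habs
    have := hdiff.add_const (xs p)
    simpa using this
  exact hgoal
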